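/- Let b,m>0 and u > 4bm, set v_±(u) := (1 ± √(1 − 4bm/u))/(2b) and c_vd(u) := √(bu/2)·(v_+(u) − 2v_−(u)). Then the function v_vd(ζ) := (v_+(u)/2)(1 − tanh(v_+(u)√(bu) ζ/(2√2))) solves v'' + c_vd(u) v' − m v + u v²(1 − b v) = 0 on ℝ, and satisfies v_vd(ζ) → v_+(u) as ζ → −∞ and v_vd(ζ) → 0 as ζ → +∞. In particular, v_vd' = √(bu/2)·v_vd·(v_vd − v_+(u)) and v_vd is a vegetation-to-desert traveling front of the layer problem with wave speed c_vd(u). -/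

import Mathlib

open Real Set Filter

/-- Derivative of `Real.tanh`. -/
lemma my_hasDerivAt_tanh (x : ℝ) :
    HasDerivAt Real.tanh (1 - Real.tanh x ^ 2) x := by
  have hc : Real.cosh x ≠ 0 := (Real.cosh_pos x).ne'
  have h := (Real.hasDerivAt_sinh x).div (Real.hasDerivAt_cosh x) hc
  have heq : ∀ y : ℝ, Real.sinh y / Real.cosh y = Real.tanh y := fun y =>
    (Real.tanh_eq_sinh_div_cosh y).symm
  have h2 : (Real.cosh x * Real.cosh x - Real.sinh x * Real.sinh x) / Real.cosh x ^ 2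
      = 1 - Real.tanh x ^ 2 := by
    rw [Real.tanh_eq_sinh_div_cosh]
    have := Real.cosh_sq_sub_sinh_sq x
    field_simp
  rw [h2] at h
  exact h.congr_of_eventuallyEq (Filter.Eventually.of_forall fun y => (heq y).symm)

/-- `tanh` in terms of `exp`. -/
lemma my_tanh_eq (x : ℝ) :
    Real.tanh x = (1 - Real.exp (-2 * x)) / (1 + Real.exp (-2 * x)) := by
  have h1 : Real.exp (-2 * x) = Real.exp (-x) * Real.exp (-x) := by
    rw [← Real.exp_add]; ring_nf
  have h2 : Real.exp x * Real.exp (-x) = 1 := by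
    rw [← Real.exp_add]; simp
  have hd : (0:ℝ) < 1 + Real.exp (-2 * x) := by positivity
  have hex : (0:ℝ) < Real.exp x := Real.exp_pos x
  have hcx : (0:ℝ) < Real.cosh x := Real.cosh_pos x
  rw [Real.tanh_eq_sinh_div_cosh, Real.sinh_eq, Real.cosh_eq,
    div_eq_div_iff (by positivity) hd.ne']
  linear_combination Real.exp x * h1 + Real.exp (-x) * h2

lemma my_tendsto_tanh_atTop : Filter.Tendsto Real.tanh Filter.atTop (nhds 1) := by
  have h : Filter.Tendsto (fun x : ℝ => Real.exp (-2 * x)) Filter.atTop (nhds 0) := by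
    apply Real.tendsto_exp_atBot.comp
    exact (tendsto_id (α := ℝ)).const_mul_atTop_of_neg (by norm_num)
  have h2 : Filter.Tendsto (fun x : ℝ => (1 - Real.exp (-2 * x)) / (1 + Real.exp (-2 * x)))
      Filter.atTop (nhds ((1 - 0) / (1 + 0))) :=
    ((tendsto_const_nhds.sub h).div (tendsto_const_nhds.add h) (by norm_num))
  have h3 := h2.congr fun x => (my_tanh_eq x).symm
  norm_num at h3
  exact h3

lemma my_tendsto_tanh_atBot : Filter.Tendsto Real.tanh Filter.atBot (nhds (-1)) := by
  have h : Filter.Tendsto (fun x : ℝ => -Real.tanh (-x)) Filter.atBot (nhds (-1)) := by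
    have := (my_tendsto_tanh_atTop.comp tendsto_neg_atBot_atTop).neg
    simpa using this
  exact h.congr fun x => by rw [Real.tanh_neg, neg_neg]

/-- The vegetation-to-desert traveling front of the layer problem:
`v_vd(ζ) = (v₊(u)/2)(1 − tanh(v₊(u)√(bu) ζ/(2√2)))` solves
`v'' + c_vd(u) v' − m v + u v²(1 − b v) = 0` with
`c_vd(u) = √(bu/2)(v₊(u) − 2v₋(u))`, connecting `v₊(u)` at `−∞` to `0` at `+∞`,
and satisfies `v' = √(bu/2)·v·(v − v₊(u))`. -/
theorem traveling_front_vd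
    (b m u : ℝ) (hb : 0 < b) (hm : 0 < m) (hu : 4*b*m < u) :
    let vm := (1 - Real.sqrt (1 - 4*b*m/u)) / (2*b)
    let vp := (1 + Real.sqrt (1 - 4*b*m/u)) / (2*b)
    let cvd := Real.sqrt (b*u/2) * (vp - 2*vm)
    let vvd : ℝ → ℝ := fun ζ =>
      (vp/2) * (1 - Real.tanh (vp * Real.sqrt (b*u) * ζ / (2*Real.sqrt 2)))
    -- the ODE
    (∀ ζ : ℝ, deriv (deriv vvd) ζ + cvd * deriv vvd ζ - m * vvd ζ
        + u * (vvd ζ)^2 * (1 - b * vvd ζ) = 0) ∧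
    -- asymptotics
    Filter.Tendsto vvd Filter.atBot (nhds vp) ∧
    Filter.Tendsto vvd Filter.atTop (nhds 0) ∧
    -- the first-order relation
    (∀ ζ : ℝ, deriv vvd ζ = Real.sqrt (b*u/2) * vvd ζ * (vvd ζ - vp)) := by
  intro vm vp cvd vvd
  have hu0 : (0:ℝ) < u := lt_trans (by positivity) hu
  have hbu : (0:ℝ) < b * u := by positivity
  have hr0 : (0:ℝ) ≤ 1 - 4*b*m/u := by
    rw [sub_nonneg, div_le_one hu0]; linarith
  set r := Real.sqrt (1 - 4*b*m/u) with hrdef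
  have hr2 : r ^ 2 = 1 - 4*b*m/u := Real.sq_sqrt hr0
  have hr1 : r < 1 := by
    rw [show (1:ℝ) = Real.sqrt 1 by simp]
    exact Real.sqrt_lt_sqrt hr0 (by
      rw [sub_lt_self_iff]; positivity)
  have hrpos : 0 ≤ r := Real.sqrt_nonneg _
  have hvp : 0 < vp := by
    show 0 < (1 + r) / (2*b); positivity
  set S := Real.sqrt (b*u/2) with hSdef
  set T := Real.sqrt 2 with hTdef
  set B := Real.sqrt (b*u) with hBdef
  have hT0 : (0:ℝ) < T := Real.sqrt_pos.mpr (by norm_num)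
  have hB0 : (0:ℝ) < B := Real.sqrt_pos.mpr hbu
  have hST : S * T = B := by
    rw [hSdef, hTdef, hBdef, ← Real.sqrt_mul (by positivity)]
    norm_num
  have hS2 : S ^ 2 = b * u / 2 := Real.sq_sqrt (by positivity)
  -- algebraic identities
  have hsum : b * (vp + vm) = 1 := by
    show b * ((1 + r) / (2*b) + (1 - r) / (2*b)) = 1
    field_simp
    ring
  have hprod : b * u * (vp * vm) = m := by
    show b * u * ((1 + r) / (2*b) * ((1 - r) / (2*b))) = m
    have hr2' : u * r^2 = u - 4*b*m := by
      rw [hr2]; field_simp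
    field_simp
    linear_combination (-1) * hr2'
  set k := vp * B / (2 * T) with hkdef
  -- rewrite vvd with k
  have hvvd : ∀ ζ : ℝ, vvd ζ = (vp/2) * (1 - Real.tanh (k * ζ)) := by
    intro ζ
    show (vp/2) * (1 - Real.tanh (vp * B * ζ / (2*T))) = _
    rw [show vp * B * ζ / (2*T) = k * ζ by rw [hkdef]; ring]
  -- first-order relation as HasDerivAt
  have hv : ∀ ζ : ℝ, HasDerivAt vvd (S * vvd ζ * (vvd ζ - vp)) ζ := by
    intro ζ
    have h1 : HasDerivAt (fun ζ : ℝ => Real.tanh (k * ζ))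
        ((1 - Real.tanh (k * ζ) ^ 2) * k) ζ := by
      have := (my_hasDerivAt_tanh (k * ζ)).comp ζ ((hasDerivAt_id ζ).const_mul k)
      simp only [mul_one] at this
      exact this
    have h2 := (h1.const_sub 1).const_mul (vp/2)
    have h3 : HasDerivAt vvd ((vp/2) * -((1 - Real.tanh (k * ζ) ^ 2) * k)) ζ := by
      refine h2.congr_of_eventuallyEq (Filter.Eventually.of_forall fun y => ?_)
      rw [hvvd y]
    convert h3 using 1
    rw [hvvd ζ, hkdef, ← hST]
    set t := Real.tanh (k * ζ)
    field_simp
    ring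
  have hderiv : ∀ ζ : ℝ, deriv vvd ζ = S * vvd ζ * (vvd ζ - vp) := fun ζ => (hv ζ).deriv
  refine ⟨?_, ?_, ?_, hderiv⟩
  · -- the ODE
    intro ζ
    have hdfun : deriv vvd = fun ζ => S * vvd ζ * (vvd ζ - vp) := funext hderiv
    have hv2 : HasDerivAt (deriv vvd)
        (S * (S * vvd ζ * (vvd ζ - vp)) * (vvd ζ - vp)
          + S * vvd ζ * (S * vvd ζ * (vvd ζ - vp))) ζ := by
      rw [hdfun]
      exact ((hv ζ).const_mul S).mul ((hv ζ).sub_const vp)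
    rw [hv2.deriv, hderiv ζ]
    set V := vvd ζ
    show S * (S * V * (V - vp)) * (V - vp) + S * V * (S * V * (V - vp))
        + S * (vp - 2 * vm) * (S * V * (V - vp)) - m * V + u * V ^ 2 * (1 - b * V) = 0
    linear_combination (V*(V-vp)*(2*V-vp) + (vp-2*vm)*V*(V-vp)) * hS2 + V * hprod
      - u * V^2 * hsum
  · -- tendsto at bot
    have hk0 : 0 < k := by rw [hkdef]; positivity
    have harg : Filter.Tendsto (fun ζ : ℝ => k * ζ) Filter.atBot Filter.atBot :=
      (tendsto_id (α := ℝ)).const_mul_atBot hk0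
    have h := my_tendsto_tanh_atBot.comp harg
    have h2 : Filter.Tendsto vvd Filter.atBot (nhds ((vp/2) * (1 - (-1)))) := by
      refine ((tendsto_const_nhds.sub h).const_mul (vp/2)).congr fun ζ => ?_
      rw [hvvd ζ]; rfl
    convert h2 using 2; ring
  · -- tendsto at top
    have hk0 : 0 < k := by rw [hkdef]; positivity
    have harg : Filter.Tendsto (fun ζ : ℝ => k * ζ) Filter.atTop Filter.atTop :=
      (tendsto_id (α := ℝ)).const_mul_atTop hk0
    have h := my_tendsto_tanh_atTop.comp harg
    have h2 : Filter.Tendsto vvd Filter.atTop (nhds ((vp/2) * (1 - 1))) := by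
      refine ((tendsto_const_nhds.sub h).const_mul (vp/2)).congr fun ζ => ?_
      rw [hvvd ζ]; rfl
    convert h2 using 2; ring
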